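/- For each σ ≥ 3, the number of zeros of t ↦ Im(ζ(σ + it)) in the interval (0, T] is at least ⌊T log 2/(2π)⌋ for every T > 0 (i.e., the strip boundaries have density at least log 2/(2π) per unit height). -/

import Mathlib

open Complex


lemma tail_bound (σ : ℝ) (hσ : 3 ≤ σ) :
    ∑' n : ℕ, ((n : ℝ) + 3) ^ (-σ) ≤ (3:ℝ) ^ ((3:ℝ) - σ) / 12 := by
  have h3 : (0:ℝ) < (3:ℝ) ^ ((3:ℝ) - σ) := Real.rpow_pos_of_pos (by norm_num) _
  apply Real.tsum_le_of_sum_range_le (fun n => Real.rpow_nonneg (by positivity) _)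
  intro n
  set g : ℕ → ℝ := fun k => 1 / (2 * ((k:ℝ) + 2) * ((k:ℝ) + 3)) with hg
  have key : ∀ i : ℕ, ((i:ℝ) + 3) ^ (-σ) ≤ (3:ℝ) ^ ((3:ℝ) - σ) * (g i - g (i+1)) := by
    intro i
    have hi3 : (3:ℝ) ≤ (i:ℝ) + 3 := by
      have : (0:ℝ) ≤ (i:ℝ) := Nat.cast_nonneg i
      linarith
    have e1 : ((i:ℝ)+3) ^ (-σ) = ((i:ℝ)+3) ^ ((3:ℝ)-σ) * ((i:ℝ)+3) ^ (-(3:ℝ)) := by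
      rw [← Real.rpow_add (by positivity)]; ring_nf
    have e2 : ((i:ℝ)+3) ^ ((3:ℝ)-σ) ≤ (3:ℝ) ^ ((3:ℝ)-σ) :=
      Real.rpow_le_rpow_of_nonpos (by norm_num) hi3 (by linarith)
    have e3 : ((i:ℝ)+3) ^ (-(3:ℝ)) ≤ g i - g (i+1) := by
      rw [show (-(3:ℝ)) = ((-3 : ℤ):ℝ) by norm_num, Real.rpow_intCast]
      have hgd : g i - g (i+1) = 1 / (((i:ℝ)+2) * ((i:ℝ)+3) * ((i:ℝ)+4)) := by
        simp only [hg]; push_cast; field_simp; ring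
      rw [hgd, zpow_neg, show ((3:ℤ)) = ((3:ℕ):ℤ) by norm_num, zpow_natCast, inv_eq_one_div,
        div_le_div_iff₀ (by positivity) (by positivity)]
      nlinarith [sq_nonneg ((i:ℝ))]
    calc ((i:ℝ)+3) ^ (-σ) = ((i:ℝ)+3) ^ ((3:ℝ)-σ) * ((i:ℝ)+3) ^ (-(3:ℝ)) := e1
      _ ≤ (3:ℝ) ^ ((3:ℝ)-σ) * (g i - g (i+1)) :=
          mul_le_mul e2 e3 (Real.rpow_nonneg (by positivity) _) h3.le
  calc ∑ i ∈ Finset.range n, ((i:ℝ) + 3) ^ (-σ)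
      ≤ ∑ i ∈ Finset.range n, (3:ℝ) ^ ((3:ℝ) - σ) * (g i - g (i+1)) :=
        Finset.sum_le_sum fun i _ => key i
    _ = (3:ℝ) ^ ((3:ℝ) - σ) * (g 0 - g n) := by
        rw [← Finset.mul_sum, Finset.sum_range_sub' g]
    _ ≤ (3:ℝ) ^ ((3:ℝ) - σ) / 12 := by
        have hgn : 0 ≤ g n := by positivity
        have hg0 : g 0 = 1/12 := by norm_num [hg]
        rw [hg0]; nlinarith


lemma numeric (σ : ℝ) (hσ : 3 ≤ σ) : (3:ℝ) ^ ((3:ℝ) - σ) / 12 < (2:ℝ) ^ (-σ) := by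
  have h2 : (0:ℝ) < (2:ℝ) ^ (-σ) := Real.rpow_pos_of_pos (by norm_num) _
  have h2' : (0:ℝ) < (2:ℝ) ^ σ := Real.rpow_pos_of_pos (by norm_num) _
  have h3' : (0:ℝ) < (3:ℝ) ^ σ := Real.rpow_pos_of_pos (by norm_num) _
  have e1 : (3:ℝ) ^ ((3:ℝ) - σ) = 27 * (3:ℝ) ^ (-σ) := by
    rw [Real.rpow_sub (by norm_num), Real.rpow_neg (by norm_num),
      show ((3:ℝ))^((3:ℝ)) = 27 by
        rw [show ((3:ℝ)) = ((3:ℕ):ℝ) by norm_num, Real.rpow_natCast]; norm_num]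
    ring
  have e2 : (3:ℝ) ^ (-σ) = (2:ℝ) ^ (-σ) * ((2:ℝ)/3) ^ σ := by
    rw [Real.div_rpow (by norm_num) (by norm_num), Real.rpow_neg (by norm_num : (0:ℝ) ≤ 2),
      Real.rpow_neg (by norm_num : (0:ℝ) ≤ 3)]
    field_simp
  have e3 : ((2:ℝ)/3) ^ σ ≤ ((2:ℝ)/3) ^ (3:ℝ) :=
    Real.rpow_le_rpow_of_exponent_ge (by norm_num) (by norm_num) hσ
  have e4 : ((2:ℝ)/3) ^ (3:ℝ) = 8/27 := by
    rw [show ((3:ℝ)) = ((3:ℕ):ℝ) by norm_num, Real.rpow_natCast]; norm_num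
  rw [e1, e2]
  rw [e4] at e3
  nlinarith


lemma im_two_cpow (σ t : ℝ) :
    ((1:ℂ) / (2:ℂ) ^ ((σ:ℂ) + t * I)).im = -((2:ℝ) ^ (-σ) * Real.sin (t * Real.log 2)) := by
  set s : ℂ := σ + t * I with hs
  rw [one_div, ← cpow_neg]
  rw [Complex.cpow_def_of_ne_zero (by norm_num)]
  have hlog : Complex.log 2 = (Real.log 2 : ℂ) := by
    rw [show (2:ℂ) = ((2:ℝ):ℂ) by norm_num, Complex.ofReal_log (by norm_num)]
  rw [hlog, Complex.exp_im, Complex.re_ofReal_mul, Complex.im_ofReal_mul]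
  have h1 : (-s).re = -σ := by simp [hs]
  have h2 : (-s).im = -t := by simp [hs]
  rw [h1, h2, Real.rpow_def_of_pos (by norm_num : (0:ℝ) < 2)]
  rw [show Real.log 2 * (-t) = -(t * Real.log 2) by ring, Real.sin_neg]
  ring

set_option maxHeartbeats 1000000 in
lemma im_est (σ t : ℝ) (hσ : 3 ≤ σ) :
    |(riemannZeta (σ + t * I)).im + (2:ℝ) ^ (-σ) * Real.sin (t * Real.log 2)| < (2:ℝ) ^ (-σ) := by
  set s : ℂ := σ + t * I with hs
  have hre : s.re = σ := by simp [hs]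
  have h1 : 1 < s.re := by rw [hre]; linarith
  set F : ℕ → ℂ := fun n => 1 / ((n:ℂ) + 1) ^ s with hF
  have hζ : riemannZeta s = ∑' n : ℕ, F n := zeta_eq_tsum_one_div_nat_add_one_cpow h1
  have hnorm : ∀ n : ℕ, ‖F n‖ = ((n:ℝ) + 1) ^ (-σ) := by
    intro n
    have hpos : (0:ℝ) < (n:ℝ) + 1 := by positivity
    rw [hF]
    simp only [norm_div, norm_one]
    rw [show ((n:ℂ) + 1) = (((n:ℝ) + 1 : ℝ) : ℂ) by push_cast; ring,
      Complex.norm_cpow_eq_rpow_re_of_pos hpos, hre,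
      Real.rpow_neg hpos.le, one_div]
  have hsumnorm : Summable (fun n : ℕ => ‖F n‖) := by
    have h0 : Summable (fun n : ℕ => 1 / ((n:ℝ)) ^ σ) :=
      Real.summable_one_div_nat_rpow.mpr (by linarith)
    have h1' : Summable (fun n : ℕ => 1 / (((n:ℕ) + 1 : ℕ):ℝ) ^ σ) :=
      (summable_nat_add_iff 1).mpr h0
    apply Summable.congr h1'
    intro n
    rw [hnorm n]
    push_cast
    rw [Real.rpow_neg (by positivity), one_div]
  have hsum : Summable F := hsumnorm.of_norm
  have hsum1 : Summable (fun n => F (n + 1)) := (summable_nat_add_iff 1).mpr hsum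
  have hsum2 : Summable (fun n => F (n + 2)) := (summable_nat_add_iff 2).mpr hsum
  have split : ∑' n : ℕ, F n = F 0 + (F 1 + ∑' n : ℕ, F (n + 2)) := by
    rw [Summable.tsum_eq_zero_add hsum, Summable.tsum_eq_zero_add hsum1]
  have hF0 : F 0 = 1 := by simp [hF]
  have hF1im : (F 1).im = -((2:ℝ) ^ (-σ) * Real.sin (t * Real.log 2)) := by
    have : F 1 = (1:ℂ) / (2:ℂ) ^ ((σ:ℂ) + t * I) := by
      rw [hF]; norm_num [hs]
    rw [this, im_two_cpow]
  have him : (riemannZeta s).im =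
      -((2:ℝ) ^ (-σ) * Real.sin (t * Real.log 2)) + (∑' n : ℕ, F (n + 2)).im := by
    rw [hζ, split, hF0]
    simp [hF1im]
  rw [him]
  have heq : ∑' n : ℕ, ‖F (n + 2)‖ = ∑' n : ℕ, ((n:ℝ) + 3) ^ (-σ) := by
    apply tsum_congr
    intro n
    rw [hnorm (n + 2)]
    push_cast
    ring_nf
  have hns : Summable (fun n : ℕ => ‖F (n + 2)‖) := (summable_nat_add_iff 2).mpr hsumnorm
  have h5 : ‖∑' n : ℕ, F (n + 2)‖ ≤ (3:ℝ) ^ ((3:ℝ) - σ) / 12 := by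
    refine (norm_tsum_le_tsum_norm hns).trans ?_
    rw [heq]
    exact tail_bound σ hσ
  have htail : |(∑' n : ℕ, F (n + 2)).im| ≤ (3:ℝ) ^ ((3:ℝ) - σ) / 12 :=
    le_trans (Complex.abs_im_le_norm _) h5
  calc |(-((2:ℝ) ^ (-σ) * Real.sin (t * Real.log 2)) + (∑' n : ℕ, F (n + 2)).im) +
        (2:ℝ) ^ (-σ) * Real.sin (t * Real.log 2)|
      = |(∑' n : ℕ, F (n + 2)).im| := by congr 1; ring
    _ ≤ (3:ℝ) ^ ((3:ℝ) - σ) / 12 := htail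
    _ < (2:ℝ) ^ (-σ) := numeric σ hσ

set_option maxHeartbeats 1000000 in
theorem zeta_im_zeros_density (σ : ℝ) (hσ : 3 ≤ σ) (T : ℝ) (hT : 0 < T) :
    ∃ S : Finset ℝ, (∀ t ∈ S, t ∈ Set.Ioc 0 T ∧ (riemannZeta (σ + t * I)).im = 0) ∧
      (⌊T * Real.log 2 / (2 * Real.pi)⌋.toNat ≤ S.card) := by
  set L : ℝ := Real.log 2 with hLdef
  have hL : 0 < L := Real.log_pos (by norm_num)
  have hπ : 0 < Real.pi := Real.pi_pos
  set N : ℕ := (⌊T * L / (2 * Real.pi)⌋).toNat with hNdef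
  set f : ℝ → ℝ := fun u => (riemannZeta ((σ:ℂ) + u * I)).im with hfdef
  set a : ℕ → ℝ := fun m => (2 * m + 1/2) * Real.pi / L with hadef
  set b : ℕ → ℝ := fun m => (2 * m + 3/2) * Real.pi / L with hbdef
  have h2σ : (0:ℝ) < (2:ℝ) ^ (-σ) := Real.rpow_pos_of_pos (by norm_num) _
  -- N bound
  have hNle : (N : ℝ) ≤ T * L / (2 * Real.pi) := by
    rcases le_or_gt 0 (⌊T * L / (2 * Real.pi)⌋) with h | h
    · rw [hNdef]
      rw [show ((⌊T * L / (2 * Real.pi)⌋.toNat : ℕ) : ℝ)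
          = ((⌊T * L / (2 * Real.pi)⌋ : ℤ) : ℝ) by
        exact_mod_cast congrArg Int.cast (Int.toNat_of_nonneg h)]
      exact Int.floor_le _
    · rw [hNdef, Int.toNat_of_nonpos h.le]
      push_cast
      positivity
  -- values of sin at a m, b m
  have hsin_a : ∀ m : ℕ, Real.sin (a m * L) = 1 := by
    intro m
    have : a m * L = Real.pi / 2 + (m : ℤ) * (2 * Real.pi) := by
      simp only [hadef]; push_cast; rw [div_mul_cancel₀ _ hL.ne']; ring
    rw [this, Real.sin_add_int_mul_two_pi, Real.sin_pi_div_two]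
  have hsin_b : ∀ m : ℕ, Real.sin (b m * L) = -1 := by
    intro m
    have : b m * L = -(Real.pi / 2) + ((m : ℤ) + 1) * (2 * Real.pi) := by
      simp only [hbdef]; push_cast; rw [div_mul_cancel₀ _ hL.ne']; ring
    rw [this]
    push_cast
    rw [show -(Real.pi / 2) + ((m:ℝ) + 1) * (2 * Real.pi)
        = -(Real.pi / 2) + ((m:ℤ) + 1 : ℤ) * (2 * Real.pi) by push_cast; ring,
      Real.sin_add_int_mul_two_pi]
    simp
  -- sign of f at a m, b m
  have hfa : ∀ m : ℕ, f (a m) < 0 := by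
    intro m
    have h := im_est σ (a m) hσ
    rw [hsin_a m] at h
    have := abs_lt.mp h
    simp only [hfdef]
    linarith [this.2]
  have hfb : ∀ m : ℕ, 0 < f (b m) := by
    intro m
    have h := im_est σ (b m) hσ
    rw [hsin_b m] at h
    have := abs_lt.mp h
    simp only [hfdef]
    linarith [this.1]
  -- continuity
  have hcont : Continuous f := by
    rw [continuous_iff_continuousAt]
    intro u
    have hne : (σ:ℂ) + u * I ≠ 1 := by
      intro h
      have := congrArg Complex.re h
      simp at this
      linarith
    have h1 : ContinuousAt (fun z : ℂ => z.im) (riemannZeta ((σ:ℂ) + u * I)) :=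
      Complex.continuous_im.continuousAt
    have h2 : ContinuousAt riemannZeta ((σ:ℂ) + u * I) :=
      (differentiableAt_riemannZeta hne).continuousAt
    have h3 : ContinuousAt (fun u : ℝ => (σ:ℂ) + u * I) u := by fun_prop
    exact h1.tendsto.comp (h2.tendsto.comp h3)
  -- basic ordering
  have hab : ∀ m : ℕ, a m < b m := by
    intro m
    simp only [hadef, hbdef]
    rw [div_lt_div_iff₀ hL hL]
    nlinarith [mul_pos hπ hL]
  have ha0 : ∀ m : ℕ, 0 < a m := by
    intro m
    simp only [hadef]
    have : (0:ℝ) ≤ (m:ℝ) := Nat.cast_nonneg m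
    positivity
  have hbT : ∀ m : ℕ, m < N → b m ≤ T := by
    intro m hm
    have h1 : (m:ℝ) + 1 ≤ (N:ℝ) := by exact_mod_cast Nat.succ_le_of_lt hm
    have h2 : (N:ℝ) * (2 * Real.pi) ≤ T * L := (le_div_iff₀ (by positivity)).mp hNle
    simp only [hbdef]
    rw [div_le_iff₀ hL]
    nlinarith
  -- existence of zeros
  have hex : ∀ m : ℕ, ∃ c, c ∈ Set.Ioo (a m) (b m) ∧ f c = 0 := by
    intro m
    have hIVT := intermediate_value_Ioo (hab m).le hcont.continuousOn
    have h0 : (0:ℝ) ∈ Set.Ioo (f (a m)) (f (b m)) := ⟨hfa m, hfb m⟩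
    obtain ⟨c, hc1, hc2⟩ := hIVT h0
    exact ⟨c, hc1, hc2⟩
  set c : ℕ → ℝ := fun m => (hex m).choose with hcdef
  have hc1 : ∀ m, c m ∈ Set.Ioo (a m) (b m) := fun m => (hex m).choose_spec.1
  have hc2 : ∀ m, f (c m) = 0 := fun m => (hex m).choose_spec.2
  have hmono : StrictMono c := by
    apply strictMono_nat_of_lt_succ
    intro m
    have h1 : c m < b m := (hc1 m).2
    have h2 : a (m+1) < c (m+1) := (hc1 (m+1)).1
    have h3 : b m ≤ a (m+1) := by
      simp only [hadef, hbdef]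
      rw [div_le_div_iff₀ hL hL]
      push_cast
      nlinarith [mul_pos hπ hL]
    linarith
  refine ⟨(Finset.range N).image c, ?_, ?_⟩
  · intro t ht
    simp only [Finset.mem_image, Finset.mem_range] at ht
    obtain ⟨m, hm, rfl⟩ := ht
    refine ⟨⟨lt_trans (ha0 m) (hc1 m).1, le_trans (hc1 m).2.le (hbT m hm)⟩, hc2 m⟩
  · rw [Finset.card_image_of_injective _ hmono.injective, Finset.card_range, hNdef]
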